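/- arXiv:0910.0284 — 2 statements merged into one kernel-verified Lean document; each statement's English description precedes it below -/
import Mathlib

section
/- For subspaces A₀, B₀, B₁, ..., Bₙ of a finite-dimensional vector space V (n ≥ 1), I(A₀;B₀) ≤ I(A₀;B₀|B₁) + I(A₀;B₁|B₂) + ⋯ + I(A₀;B_{n-1}|Bₙ) + I(B₀;Bₙ), where I(X;Y) = dim X + dim Y - dim(X+Y) and I(X;Y|T) = dim(X+T) + dim(Y+T) - dim(X+Y+T) - dim T. -/
open Module

noncomputable def condH {F V : Type*} [Field F] [AddCommGroup V] [Module F V]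
    (X Y : Submodule F V) : ℤ :=
  (finrank F ↑(X ⊔ Y) : ℤ) - finrank F ↑Y

noncomputable def mutI {F V : Type*} [Field F] [AddCommGroup V] [Module F V]
    (X Y : Submodule F V) : ℤ :=
  (finrank F ↑X : ℤ) + finrank F ↑Y - finrank F ↑(X ⊔ Y)

noncomputable def condI {F V : Type*} [Field F] [AddCommGroup V] [Module F V]
    (X Y T : Submodule F V) : ℤ :=
  (finrank F ↑(X ⊔ T) : ℤ) + finrank F ↑(Y ⊔ T) - finrank F ↑(X ⊔ Y ⊔ T) - finrank F ↑T

lemma sup_inf_rank {F V : Type*} [Field F] [AddCommGroup V] [Module F V]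
    [FiniteDimensional F V] (X Y : Submodule F V) :
    (finrank F ↑(X ⊔ Y) : ℤ) + finrank F ↑(X ⊓ Y) = finrank F ↑X + finrank F ↑Y := by
  exact_mod_cast congrArg (Nat.cast : ℕ → ℤ)
    (Submodule.finrank_sup_add_finrank_inf_eq X Y)

lemma mutI_eq_inf {F V : Type*} [Field F] [AddCommGroup V] [Module F V]
    [FiniteDimensional F V] (X Y : Submodule F V) :
    mutI X Y = finrank F ↑(X ⊓ Y) := by
  have := sup_inf_rank (F := F) X Y
  unfold mutI; linarith

lemma rank_mono {F V : Type*} [Field F] [AddCommGroup V] [Module F V]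
    [FiniteDimensional F V] {X Y : Submodule F V} (h : X ≤ Y) :
    (finrank F ↑X : ℤ) ≤ finrank F ↑Y := by
  exact_mod_cast Submodule.finrank_mono h

lemma condI_step {F V : Type*} [Field F] [AddCommGroup V] [Module F V]
    [FiniteDimensional F V] (A X T : Submodule F V) {S : Submodule F V} (hS : S ≤ A) :
    (finrank F ↑(S ⊓ X) : ℤ) - finrank F ↑(S ⊓ T) ≤ condI A X T := by
  have h1 := sup_inf_rank (F := F) (A ⊔ T) (X ⊔ T)
  have hsup : (A ⊔ T) ⊔ (X ⊔ T) = A ⊔ X ⊔ T := by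
    rw [sup_assoc, sup_comm T (X ⊔ T), sup_assoc, sup_idem, ← sup_assoc]
  rw [hsup] at h1
  -- (S ⊓ X) ⊔ T ≤ (A ⊔ T) ⊓ (X ⊔ T)
  have hle : (S ⊓ X) ⊔ T ≤ (A ⊔ T) ⊓ (X ⊔ T) := by
    apply sup_le
    · exact le_inf (le_trans (le_trans inf_le_left hS) le_sup_left)
        (le_trans inf_le_right le_sup_left)
    · exact le_inf le_sup_right le_sup_right
  have h2 := rank_mono (F := F) hle
  have h3 := sup_inf_rank (F := F) (S ⊓ X) T
  have h4 : (finrank F ↑(S ⊓ X ⊓ T) : ℤ) ≤ finrank F ↑(S ⊓ T) :=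
    rank_mono (inf_le_inf_right T (inf_le_left))
  unfold condI
  linarith

theorem stmt10 {F V : Type*} [Field F] [AddCommGroup V] [Module F V] [FiniteDimensional F V]
    (n : ℕ) (hn : 1 ≤ n) (A : Submodule F V) (B : ℕ → Submodule F V) :
    mutI A (B 0) ≤
      (∑ i ∈ Finset.range n, condI A (B i) (B (i + 1))) + mutI (B 0) (B n) := by
  set S := A ⊓ B 0 with hSdef
  have hS : S ≤ A := inf_le_left
  have key : ∀ i ∈ Finset.range n,
      (finrank F ↑(S ⊓ B i) : ℤ) - finrank F ↑(S ⊓ B (i + 1))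
        ≤ condI A (B i) (B (i + 1)) := fun i _ => condI_step A (B i) (B (i + 1)) hS
  have hsum := Finset.sum_le_sum key
  rw [Finset.sum_range_sub' (fun i => (finrank F ↑(S ⊓ B i) : ℤ))] at hsum
  have h0 : S ⊓ B 0 = S := by rw [hSdef, inf_assoc, inf_idem]
  rw [h0] at hsum
  have hA : mutI A (B 0) = (finrank F ↑S : ℤ) := mutI_eq_inf A (B 0)
  have hB : mutI (B 0) (B n) = (finrank F ↑(B 0 ⊓ B n) : ℤ) := mutI_eq_inf (B 0) (B n)
  have hfin : (finrank F ↑(S ⊓ B n) : ℤ) ≤ finrank F ↑(B 0 ⊓ B n) :=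
    rank_mono (inf_le_inf_right (B n) inf_le_right)
  linarith
end

section
/- For n ≥ 1 and subspaces A, B, C₁, ..., Cₙ of a finite-dimensional vector space V, (n-1)·I(A;B) ≤ Σ_{i=1}^{n} I(A;B|C_i) + (Σ_{i=1}^{n} dim C_i) - dim(C₁ + C₂ + ⋯ + Cₙ), where I(X;Y) = dim X + dim Y - dim(X+Y) and I(X;Y|T) = dim(X+T) + dim(Y+T) - dim(X+Y+T) - dim T. -/
open Module

section Aux

variable {F V : Type*} [Field F] [AddCommGroup V] [Module F V] [FiniteDimensional F V]

lemma mutI_eq_inf_s12 (A B : Submodule F V) : mutI A B = (finrank F ↑(A ⊓ B) : ℤ) := by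
  have h := Submodule.finrank_sup_add_finrank_inf_eq A B
  unfold mutI; omega

lemma condI_ge (A B C : Submodule F V) :
    (finrank F ↑((A ⊓ B) ⊔ C) : ℤ) - finrank F ↑C ≤ condI A B C := by
  have h1 := Submodule.finrank_sup_add_finrank_inf_eq (A ⊔ C) (B ⊔ C)
  have h2 : (A ⊔ C) ⊔ (B ⊔ C) = A ⊔ B ⊔ C := by
    rw [sup_sup_sup_comm, sup_idem]
  have h3 : (A ⊓ B) ⊔ C ≤ (A ⊔ C) ⊓ (B ⊔ C) :=
    le_inf (sup_le_sup_right inf_le_left C) (sup_le_sup_right inf_le_right C)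
  have h4 := Submodule.finrank_mono h3
  rw [h2] at h1
  unfold condI; omega

lemma sum_sup_ge (Z : Submodule F V) (C : ℕ → Submodule F V) (s : Finset ℕ)
    (hs : s.Nonempty) :
    ((s.card : ℤ) - 1) * finrank F Z + finrank F ↑(Z ⊔ s.sup C) ≤
      ∑ i ∈ s, (finrank F ↑(Z ⊔ C i) : ℤ) := by
  induction hs using Finset.Nonempty.cons_induction with
  | singleton i => rw [Finset.sup_singleton]; simp
  | cons i s hi hs ih =>
    rw [Finset.sum_cons, Finset.sup_cons, Finset.card_cons]
    have h1 := Submodule.finrank_sup_add_finrank_inf_eq (Z ⊔ C i) (Z ⊔ s.sup C)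
    have h2 : (Z ⊔ C i) ⊔ (Z ⊔ s.sup C) = Z ⊔ (C i ⊔ s.sup C) := by
      rw [sup_sup_sup_comm, sup_idem]
    have h3 : Z ≤ (Z ⊔ C i) ⊓ (Z ⊔ s.sup C) := le_inf le_sup_left le_sup_left
    have h4 := Submodule.finrank_mono h3
    rw [h2] at h1
    have h1' : (finrank F ↑(Z ⊔ (C i ⊔ s.sup C)) : ℤ)
        + finrank F ↑((Z ⊔ C i) ⊓ (Z ⊔ s.sup C))
        = finrank F ↑(Z ⊔ C i) + finrank F ↑(Z ⊔ s.sup C) := by exact_mod_cast h1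
    have h4' : (finrank F Z : ℤ) ≤ finrank F ↑((Z ⊔ C i) ⊓ (Z ⊔ s.sup C)) := by
      exact_mod_cast h4
    push_cast
    nlinarith [ih]

end Aux

theorem stmt12 {F V : Type*} [Field F] [AddCommGroup V] [Module F V] [FiniteDimensional F V]
    (n : ℕ) (hn : 1 ≤ n) (A B : Submodule F V) (C : ℕ → Submodule F V) :
    ((n : ℤ) - 1) * mutI A B ≤
      (∑ i ∈ Finset.Icc 1 n, condI A B (C i)) +
        (∑ i ∈ Finset.Icc 1 n, (finrank F ↑(C i) : ℤ)) -
          (finrank F ↑((Finset.Icc 1 n).sup C) : ℤ) := by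
  set s : Finset ℕ := Finset.Icc 1 n with hsdef
  have hne : s.Nonempty := ⟨1, by simp [hsdef]; omega⟩
  have hcard : (s.card : ℤ) = n := by simp [hsdef]
  set Z := A ⊓ B with hZ
  have hmut : mutI A B = (finrank F Z : ℤ) := mutI_eq_inf_s12 A B
  have hsum : ∑ i ∈ s, ((finrank F ↑(Z ⊔ C i) : ℤ) - finrank F ↑(C i)) ≤
      ∑ i ∈ s, condI A B (C i) :=
    Finset.sum_le_sum fun i _ => condI_ge A B (C i)
  have hkey := sum_sup_ge Z C s hne
  have hmono : (finrank F ↑(s.sup C) : ℤ) ≤ finrank F ↑(Z ⊔ s.sup C) := by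
    exact_mod_cast Submodule.finrank_mono (le_sup_right : s.sup C ≤ Z ⊔ s.sup C)
  rw [Finset.sum_sub_distrib] at hsum
  rw [hmut, ← hcard]
  linarith
end
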